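/- Let α₁,…,αₙ be the n distinct roots of x^n - λ in a field F (λ ≠ 0, char F ∤ n). Then the complete homogeneous symmetric polynomials satisfy S₀(α₁,…,αₙ) = 1, S_t(α₁,…,αₙ) = 0 for all 1 ≤ t < n, and S_{nj}(α₁,…,αₙ) = λ^j for all j ≥ 0. -/

import Mathlib

/-- The complete homogeneous symmetric polynomial of degree `t` evaluated at `x`. -/
def hsym {F : Type*} [CommRing F] (n : ℕ) (x : Fin n → F) (t : ℕ) : F :=
  ∑ f ∈ Finset.Nat.antidiagonalTuple n t, ∏ i, x i ^ f i

open Polynomial in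
/-- Factorization of `X^n - C lam` over its `n` distinct roots. -/
lemma aux_factor {F : Type*} [Field F] {n : ℕ} {lam : F} (α : Fin n → F)
    (hα : Function.Injective α) (hroot : ∀ i, α i ^ n = lam) (hn : 0 < n) :
    (X : F[X]) ^ n - C lam = ∏ i, (X - C (α i)) := by
  set p : F[X] := X ^ n - C lam with hp
  have hpm : p.Monic := monic_X_pow_sub_C _ hn.ne'
  have hp0 : p ≠ 0 := hpm.ne_zero
  have hdeg : p.natDegree = n := natDegree_X_pow_sub_C
  classical
  have hroots : (Finset.univ.val.map α : Multiset F) ≤ p.roots := by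
    have hnd : (Finset.univ.val.map α : Multiset F).Nodup :=
      Finset.univ.nodup.map hα
    rw [Multiset.le_iff_subset hnd]
    intro a ha
    obtain ⟨i, _, rfl⟩ := Multiset.mem_map.mp ha
    rw [mem_roots hp0, IsRoot.def, hp]
    simp [hroot i]
  have hdvd : (∏ i, (X - C (α i))) ∣ p := by
    have := (Multiset.prod_X_sub_C_dvd_iff_le_roots hp0 (Finset.univ.val.map α)).mpr hroots
    simpa [Finset.prod, Function.comp_def] using this
  obtain ⟨r, hr⟩ := hdvd
  have hqm : (∏ i, (X - C (α i))).Monic := monic_prod_of_monic _ _ fun i _ => monic_X_sub_C _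
  have hrq : r.Monic := hqm.of_mul_monic_left (hr ▸ hpm)
  have hqdeg : (∏ i, (X - C (α i))).natDegree = n := by
    rw [natDegree_prod_of_monic Finset.univ _ (fun i _ => monic_X_sub_C (α i))]
    simp
  have hr0 : r.natDegree = 0 := by
    have := hr ▸ hdeg
    rw [natDegree_mul hqm.ne_zero hrq.ne_zero, hqdeg] at this
    omega
  rw [hr, hrq.natDegree_eq_zero.mp hr0, mul_one]

open Polynomial in
lemma aux_reflect {F : Type*} [CommRing F] {ι : Type*} (a : ι → F) (s : Finset ι) :
    Polynomial.reflect s.card (∏ i ∈ s, (X - C (a i))) = ∏ i ∈ s, (1 - C (a i) * X) := by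
  classical
  induction s using Finset.induction with
  | empty => simp
  | @insert x s hx ih =>
    have hdeg : (∏ i ∈ s, (X - C (a i))).natDegree ≤ s.card := by
      refine le_trans (natDegree_prod_le _ _) ?_
      refine le_trans (Finset.sum_le_card_nsmul _ _ 1 fun i _ => ?_) (by simp)
      exact natDegree_X_sub_C_le _
    rw [Finset.prod_insert hx, Finset.card_insert_of_notMem hx, add_comm,
      reflect_mul _ _ (natDegree_X_sub_C_le (a x)) hdeg, ih, Finset.prod_insert hx]
    congr 1
    rw [reflect_sub, reflect_C, pow_one, ← pow_one (X : F[X]), reflect_monomial]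
    simp

open Polynomial PowerSeries in
lemma aux_geom {F : Type*} [CommRing F] (a : F) :
    (1 - PowerSeries.C a * PowerSeries.X) * PowerSeries.mk (a ^ ·) = 1 := by
  ext k
  rw [sub_mul, one_mul, mul_assoc, map_sub]
  cases k with
  | zero => simp
  | succ k =>
    rw [PowerSeries.coeff_C_mul, PowerSeries.coeff_succ_X_mul]
    simp [pow_succ, mul_comm]

open PowerSeries in
lemma aux_hsym_coeff {F : Type*} [CommRing F] (n : ℕ) (α : Fin n → F) (t : ℕ) :
    hsym n α t = PowerSeries.coeff t (∏ i, PowerSeries.mk (α i ^ ·)) := by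
  rw [PowerSeries.coeff_prod]
  unfold hsym
  refine Finset.sum_nbij' (fun f => Finsupp.equivFunOnFinite.symm f) (fun l => ⇑l) ?_ ?_ ?_ ?_ ?_
  · intro f hf
    rw [Finset.Nat.mem_antidiagonalTuple] at hf
    rw [Finset.mem_finsuppAntidiag]
    constructor
    · simpa [Finset.sum] using hf
    · exact Finset.subset_univ _
  · intro l hl
    rw [Finset.mem_finsuppAntidiag] at hl
    rw [Finset.Nat.mem_antidiagonalTuple]
    simpa using hl.1
  · intro f _; ext i; simp [Finsupp.equivFunOnFinite]; rfl
  · intro l _; simp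
  · intro f _
    simp [PowerSeries.coeff_mk]

theorem stmt_5 {F : Type*} [Field F] (n : ℕ) (lam : F) (hlam : lam ≠ 0)
    (hn : (n : F) ≠ 0) (α : Fin n → F) (hα : Function.Injective α)
    (hroot : ∀ i, α i ^ n = lam) :
    hsym n α 0 = 1 ∧ (∀ t, 1 ≤ t → t < n → hsym n α t = 0) ∧
      (∀ j : ℕ, hsym n α (n * j) = lam ^ j) := by
  have hn0 : 0 < n := by
    rcases Nat.eq_zero_or_pos n with h | h
    · exact absurd (by simp [h]) hn
    · exact h
  classical
  set P : PowerSeries F := ∏ i, PowerSeries.mk (α i ^ ·) with hP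
  -- the polynomial identity, reflected
  have hpoly : (∏ i, (1 - Polynomial.C (α i) * Polynomial.X) : Polynomial F)
      = 1 - Polynomial.C lam * Polynomial.X ^ n := by
    have h1 := aux_factor α hα hroot hn0
    have h2 := aux_reflect α (Finset.univ : Finset (Fin n))
    rw [Finset.card_univ, Fintype.card_fin, ← h1, Polynomial.reflect_sub,
      Polynomial.reflect_C, Polynomial.reflect_monomial, Polynomial.revAt_le le_rfl,
      Nat.sub_self, pow_zero] at h2
    exact h2.symm
  -- push to power series
  have hQ : (∏ i, (1 - PowerSeries.C (α i) * PowerSeries.X))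
      = 1 - PowerSeries.C lam * PowerSeries.X ^ n := by
    have := congrArg (Polynomial.coeToPowerSeries.ringHom (R := F)) hpoly
    simpa [map_prod, map_sub, map_mul, map_pow, map_one] using this
  have key : (1 - PowerSeries.C lam * PowerSeries.X ^ n) * P = 1 := by
    rw [← hQ, hP, ← Finset.prod_mul_distrib]
    simp [aux_geom]
  have key' : P - PowerSeries.C lam * (PowerSeries.X ^ n * P) = 1 := by
    rw [← key]; ring
  have hrec : ∀ t, PowerSeries.coeff t P
      = PowerSeries.coeff t (1 : PowerSeries F)
        + lam * PowerSeries.coeff t (PowerSeries.X ^ n * P) := by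
    intro t
    have := congrArg (PowerSeries.coeff t) key'
    rw [map_sub, PowerSeries.coeff_C_mul] at this
    linear_combination this
  have h0 : hsym n α 0 = 1 := by
    rw [aux_hsym_coeff, ← hP, hrec 0, PowerSeries.coeff_X_pow_mul' P n 0]
    simp [Nat.not_le.mpr hn0, hn0.ne']
  refine ⟨h0, ?_, ?_⟩
  · intro t ht1 htn
    rw [aux_hsym_coeff, ← hP, hrec t, PowerSeries.coeff_X_pow_mul' P n t,
      if_neg (by omega)]
    have : t ≠ 0 := by omega
    simp [PowerSeries.coeff_one, this]
  · intro j
    induction j with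
    | zero => simpa using h0
    | succ j ih =>
      rw [aux_hsym_coeff, ← hP] at ih ⊢
      have hnj : n * (j + 1) = n * j + n := by ring
      rw [hnj, hrec (n * j + n), PowerSeries.coeff_X_pow_mul P n (n * j), ih]
      have : n * j + n ≠ 0 := by omega
      simp [PowerSeries.coeff_one, this, pow_succ, mul_comm, hn0.ne']
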